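/- In any noncommutative probability space, for a_1, a_2, a_3, a_4 one has κ_{(ℓ,r,ℓ,r)}(a_1,a_2,a_3,a_4) = κ_4(a_1,a_2,a_3,a_4) + κ_2(a_1,a_4)κ_2(a_2,a_3) − κ_2(a_1,a_3)κ_2(a_2,a_4), where κ_2 and κ_4 are free cumulants. -/

import Mathlib

open scoped Classical

/-- `P` is a partition of `{1,...,n}` (modelled on `Fin n`). -/
def IsPartition {n : ℕ} (P : Finset (Finset (Fin n))) : Prop :=
  ∅ ∉ P ∧ ∀ a : Fin n, ∃! V, V ∈ P ∧ a ∈ V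

/-- `P` is non-crossing. -/
def IsNC {n : ℕ} (P : Finset (Finset (Fin n))) : Prop :=
  ¬ ∃ V ∈ P, ∃ W ∈ P, V ≠ W ∧ ∃ a b c d : Fin n,
    a < b ∧ b < c ∧ c < d ∧ a ∈ V ∧ c ∈ V ∧ b ∈ W ∧ d ∈ W

/-- The permutation `σ_χ` associated with `χ ∈ {ℓ,r}^n` (with `ℓ = true`,
`r = false`): it lists the `ℓ`-positions of `χ` in increasing order, followed by the
`r`-positions in decreasing order. -/
def sigmaChi {n : ℕ} (χ : Fin n → Bool) : Fin n → Fin n :=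
  fun i => (((List.finRange n).filter χ) ++
    (((List.finRange n).filter (fun j => !(χ j))).reverse)).getD i i

/-- The set of partitions `P^(χ)(n) = {σ_χ·π : π ∈ NC(n)}`. -/
noncomputable def PchiF (n : ℕ) (χ : Fin n → Bool) :
    Finset (Finset (Finset (Fin n))) :=
  (Finset.univ.filter (fun P => IsPartition P ∧ IsNC P)).image
    (fun P => P.image (Finset.image (sigmaChi χ)))


/-- Restriction of an `n`-tuple to a subset `V` of indices, listed in increasing
order. -/
noncomputable def restr {n : ℕ} {α : Type*} (x : Fin n → α) (V : Finset (Fin n)) :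
    Fin V.card → α :=
  fun i => x (V.orderIsoOfFin rfl i).1

/-- The moment ↔ `(ℓ,r)`-cumulant formula: for all `n ≥ 1`, `χ ∈ {ℓ,r}^n` and
`a_1, ..., a_n ∈ A`, `φ(a_1 ⋯ a_n) = Σ_{π ∈ P^(χ)(n)} Π_{V ∈ π}
κ_{χ|V}((a_1,...,a_n)|V)`. -/
def momentFormula {A : Type*} [Ring A] [Algebra ℂ A] (φ : A →ₗ[ℂ] ℂ)
    (κ : (m : ℕ) → (Fin m → Bool) → MultilinearMap ℂ (fun _ : Fin m => A) ℂ) :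
    Prop :=
  ∀ (n : ℕ), 1 ≤ n → ∀ (χ : Fin n → Bool) (a : Fin n → A),
    φ ((List.ofFn a).prod) =
      ∑ π ∈ PchiF n χ, ∏ V ∈ π, κ V.card (restr χ V) (restr a V)


/-- The moment ↔ free cumulant formula: `φ(a_1 ⋯ a_n) = Σ_{π ∈ NC(n)} Π_{V ∈ π}
κ_{|V|}((a_1,...,a_n)|V)`. -/
def freeFormula {A : Type*} [Ring A] [Algebra ℂ A] (φ : A →ₗ[ℂ] ℂ)
    (κ : (m : ℕ) → MultilinearMap ℂ (fun _ : Fin m => A) ℂ) : Prop :=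
  ∀ (n : ℕ), 1 ≤ n → ∀ a : Fin n → A,
    φ ((List.ofFn a).prod) =
      ∑ π ∈ Finset.univ.filter
        (fun P : Finset (Finset (Fin n)) => IsPartition P ∧ IsNC P),
        ∏ V ∈ π, κ V.card (restr a V)



-- ===================== auxiliary machinery =====================

instance instDecIsPartition {n : ℕ} (P : Finset (Finset (Fin n))) : Decidable (IsPartition P) :=
  decidable_of_iff (∅ ∉ P ∧ ∀ a : Fin n, ∃ V ∈ P, a ∈ V ∧ ∀ W ∈ P, a ∈ W → W = V) (by
    refine and_congr Iff.rfl (forall_congr' fun a => ?_)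
    constructor
    · rintro ⟨V, h1, h2, h3⟩
      exact ⟨V, ⟨h1, h2⟩, fun W hW => h3 W hW.1 hW.2⟩
    · rintro ⟨V, ⟨h1, h2⟩, h3⟩
      exact ⟨V, h1, h2, fun W hW ha => h3 W ⟨hW, ha⟩⟩)

instance instDecIsNC {n : ℕ} (P : Finset (Finset (Fin n))) : Decidable (IsNC P) :=
  decidable_of_iff (¬ ∃ V ∈ P, ∃ W ∈ P, V ≠ W ∧ ∃ a b c d : Fin n,
    a < b ∧ b < c ∧ c < d ∧ a ∈ V ∧ c ∈ V ∧ b ∈ W ∧ d ∈ W) Iff.rfl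

/-- The partition of `Fin n` into the fibers of a colouring `c`. -/
def partOf {n : ℕ} (c : Fin n → Fin n) : Finset (Finset (Fin n)) :=
  Finset.univ.image (fun a => Finset.univ.filter (fun b => c b = c a))

lemma part_eq {n : ℕ} {P : Finset (Finset (Fin n))} (hP : IsPartition P) :
    ∃ c : Fin n → Fin n, P = partOf c := by
  obtain ⟨hne, hu⟩ := hP
  choose bl hmem huniq using fun a : Fin n => hu a
  have hbb : ∀ a b : Fin n, b ∈ bl a ↔ bl b = bl a := by
    intro a b
    constructor
    · intro h; exact (huniq b (bl a) ⟨(hmem a).1, h⟩).symm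
    · intro h; rw [← h]; exact (hmem b).2
  have hnonempty : ∀ a : Fin n, (bl a).Nonempty := fun a => ⟨a, (hmem a).2⟩
  refine ⟨fun a => (bl a).min' (hnonempty a), ?_⟩
  have hcc : ∀ a b : Fin n,
      (bl b).min' (hnonempty b) = (bl a).min' (hnonempty a) ↔ bl b = bl a := by
    intro a b
    constructor
    · intro h
      have h1 : (bl b).min' (hnonempty b) ∈ bl b := Finset.min'_mem _ _
      have h2 : (bl b).min' (hnonempty b) ∈ bl a := h ▸ Finset.min'_mem _ _
      rw [← (hbb b _).1 h1, (hbb a _).1 h2]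
    · intro h
      simp only [h]
  have hfil : ∀ a : Fin n,
      (Finset.univ.filter fun b => (bl b).min' (hnonempty b) = (bl a).min' (hnonempty a))
        = bl a := by
    intro a
    ext b
    simp only [Finset.mem_filter, Finset.mem_univ, true_and]
    rw [hcc a b, hbb a b]
  ext V
  simp only [partOf, Finset.mem_image, Finset.mem_univ, true_and]
  constructor
  · intro hV
    have hVne : V.Nonempty := Finset.nonempty_iff_ne_empty.mpr (by rintro rfl; exact hne hV)
    obtain ⟨a, ha⟩ := hVne
    refine ⟨a, ?_⟩
    rw [hfil a, huniq a V ⟨hV, ha⟩]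
  · rintro ⟨a, rfl⟩
    rw [hfil a]
    exact (hmem a).1

lemma sort_eq_of {n : ℕ} (V : Finset (Fin n)) (l : List (Fin n)) (hs : l.Pairwise (· ≤ ·))
    (hp : V.1 = ↑l) : V.sort (· ≤ ·) = l := by
  refine List.Perm.eq_of_pairwise' (V.pairwise_sort _) hs ?_
  rw [← Multiset.coe_eq_coe, Finset.sort_eq, hp]

lemma restr_val {n : ℕ} {α : Type*} (x : Fin n → α) (V : Finset (Fin n)) (l : List (Fin n))
    (hl : V.sort (· ≤ ·) = l) (i : Fin V.card) (c : Fin n) (h : l[i.1]? = some c) :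
    restr x V i = x c := by
  unfold restr
  congr 1
  rw [Finset.coe_orderIsoOfFin_apply, Finset.orderEmbOfFin_apply]
  have h2 : (V.sort (· ≤ ·))[i.1]? = some c := by rw [hl]; exact h
  rw [List.getElem?_eq_getElem (by rw [Finset.length_sort]; exact i.2)] at h2
  exact Option.some.inj h2

-- ===================== explicit partition sets =====================

def NC1 : Finset (Finset (Finset (Fin 1))) := { {{0}} }

def NC2 : Finset (Finset (Finset (Fin 2))) := { {{0},{1}}, {{0,1}} }

def NC3 : Finset (Finset (Finset (Fin 3))) :=
  { {{0},{1},{2}}, {{0,1},{2}}, {{0,2},{1}}, {{1,2},{0}}, {{0,1,2}} }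

def NC4 : Finset (Finset (Finset (Fin 4))) :=
  { {{0},{1},{2},{3}},
    {{0,1},{2},{3}}, {{0,2},{1},{3}}, {{0,3},{1},{2}},
    {{1,2},{0},{3}}, {{1,3},{0},{2}}, {{2,3},{0},{1}},
    {{0,1},{2,3}}, {{0,3},{1,2}},
    {{0,1,2},{3}}, {{0,1,3},{2}}, {{0,2,3},{1}}, {{1,2,3},{0}},
    {{0,1,2,3}} }

def P4 : Finset (Finset (Finset (Fin 4))) :=
  { {{0},{1},{2},{3}},
    {{0,1},{2},{3}}, {{0,2},{1},{3}}, {{0,3},{1},{2}},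
    {{1,2},{0},{3}}, {{1,3},{0},{2}}, {{2,3},{0},{1}},
    {{0,1},{2,3}}, {{0,2},{1,3}},
    {{0,1,2},{3}}, {{0,1,3},{2}}, {{0,2,3},{1}}, {{1,2,3},{0}},
    {{0,1,2,3}} }

def cross4 : Finset (Finset (Fin 4)) := {{0,2},{1,3}}

lemma key1 : ∀ P : Finset (Finset (Fin 1)), (IsPartition P ∧ IsNC P) ↔ P ∈ NC1 := by decide

lemma key2 : ∀ P : Finset (Finset (Fin 2)), (IsPartition P ∧ IsNC P) ↔ P ∈ NC2 := by decide

set_option maxRecDepth 20000 in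
lemma key3 : ∀ P : Finset (Finset (Fin 3)), (IsPartition P ∧ IsNC P) ↔ P ∈ NC3 := by decide

set_option maxRecDepth 20000 in
lemma aux4in : ∀ P ∈ NC4, IsPartition P ∧ IsNC P := by
  intro P hP
  simp only [NC4, Finset.mem_insert, Finset.mem_singleton] at hP
  rcases hP with rfl|rfl|rfl|rfl|rfl|rfl|rfl|rfl|rfl|rfl|rfl|rfl|rfl|rfl <;>
    exact ⟨by decide, by decide⟩

set_option maxRecDepth 100000 in
set_option maxHeartbeats 4000000 in
lemma aux4all : ∀ c : Fin 4 → Fin 4, partOf c ∈ insert cross4 NC4 := by decide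

set_option maxRecDepth 100000 in
lemma auxcross : ¬ IsNC cross4 := by decide

lemma key4 : ∀ P : Finset (Finset (Fin 4)), (IsPartition P ∧ IsNC P) ↔ P ∈ NC4 := by
  intro P
  constructor
  · rintro ⟨hP, hNC⟩
    obtain ⟨c, rfl⟩ := part_eq hP
    rcases Finset.mem_insert.mp (aux4all c) with h | h
    · rw [h] at hNC; exact absurd hNC auxcross
    · exact h
  · intro h
    exact aux4in P h

lemma hset1 : (Finset.univ.filter
    (fun P : Finset (Finset (Fin 1)) => IsPartition P ∧ IsNC P)) = NC1 := by
  ext P; simp only [Finset.mem_filter, Finset.mem_univ, true_and]; exact key1 P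

lemma hset2 : (Finset.univ.filter
    (fun P : Finset (Finset (Fin 2)) => IsPartition P ∧ IsNC P)) = NC2 := by
  ext P; simp only [Finset.mem_filter, Finset.mem_univ, true_and]; exact key2 P

lemma hset3 : (Finset.univ.filter
    (fun P : Finset (Finset (Fin 3)) => IsPartition P ∧ IsNC P)) = NC3 := by
  ext P; simp only [Finset.mem_filter, Finset.mem_univ, true_and]; exact key3 P

lemma hset4 : (Finset.univ.filter
    (fun P : Finset (Finset (Fin 4)) => IsPartition P ∧ IsNC P)) = NC4 := by
  ext P; simp only [Finset.mem_filter, Finset.mem_univ, true_and]; exact key4 P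

lemma himg1 : ∀ c : Fin 1 → Bool,
    NC1.image (fun P => P.image (Finset.image (sigmaChi c))) = NC1 := by decide

lemma himg2 : ∀ c : Fin 2 → Bool,
    NC2.image (fun P => P.image (Finset.image (sigmaChi c))) = NC2 := by decide

set_option maxRecDepth 40000 in
lemma himg3 : ∀ c : Fin 3 → Bool,
    NC3.image (fun P => P.image (Finset.image (sigmaChi c))) = NC3 := by decide

set_option maxRecDepth 100000 in
set_option maxHeartbeats 1000000 in
lemma himg4 :
    NC4.image (fun P => P.image (Finset.image (sigmaChi ![true,false,true,false]))) = P4 := by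
  decide

-- ===================== restriction lemmas =====================

lemma rst1_0 {α : Type*} (x : Fin 1 → α) :
    restr x ({0} : Finset (Fin 1)) = x := by
  have h : ({0} : Finset (Fin 1)).sort (· ≤ ·) = [0] :=
    sort_eq_of _ _ (by decide) (by decide)
  funext i
  fin_cases i
  · exact restr_val x _ _ h _ 0 rfl

lemma rst2_0 {α : Type*} (x : Fin 2 → α) :
    restr x ({0} : Finset (Fin 2)) = ![x 0] := by
  have h : ({0} : Finset (Fin 2)).sort (· ≤ ·) = [0] :=
    sort_eq_of _ _ (by decide) (by decide)
  funext i
  fin_cases i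
  · exact restr_val x _ _ h _ 0 rfl

lemma rst2_1 {α : Type*} (x : Fin 2 → α) :
    restr x ({1} : Finset (Fin 2)) = ![x 1] := by
  have h : ({1} : Finset (Fin 2)).sort (· ≤ ·) = [1] :=
    sort_eq_of _ _ (by decide) (by decide)
  funext i
  fin_cases i
  · exact restr_val x _ _ h _ 1 rfl

lemma rst2_01 {α : Type*} (x : Fin 2 → α) :
    restr x ({0,1} : Finset (Fin 2)) = x := by
  have h : ({0,1} : Finset (Fin 2)).sort (· ≤ ·) = [0, 1] :=
    sort_eq_of _ _ (by decide) (by decide)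
  funext i
  fin_cases i
  · exact restr_val x _ _ h _ 0 rfl
  · exact restr_val x _ _ h _ 1 rfl

lemma rst3_0 {α : Type*} (x : Fin 3 → α) :
    restr x ({0} : Finset (Fin 3)) = ![x 0] := by
  have h : ({0} : Finset (Fin 3)).sort (· ≤ ·) = [0] :=
    sort_eq_of _ _ (by decide) (by decide)
  funext i
  fin_cases i
  · exact restr_val x _ _ h _ 0 rfl

lemma rst3_1 {α : Type*} (x : Fin 3 → α) :
    restr x ({1} : Finset (Fin 3)) = ![x 1] := by
  have h : ({1} : Finset (Fin 3)).sort (· ≤ ·) = [1] :=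
    sort_eq_of _ _ (by decide) (by decide)
  funext i
  fin_cases i
  · exact restr_val x _ _ h _ 1 rfl

lemma rst3_2 {α : Type*} (x : Fin 3 → α) :
    restr x ({2} : Finset (Fin 3)) = ![x 2] := by
  have h : ({2} : Finset (Fin 3)).sort (· ≤ ·) = [2] :=
    sort_eq_of _ _ (by decide) (by decide)
  funext i
  fin_cases i
  · exact restr_val x _ _ h _ 2 rfl

lemma rst3_01 {α : Type*} (x : Fin 3 → α) :
    restr x ({0,1} : Finset (Fin 3)) = ![x 0, x 1] := by
  have h : ({0,1} : Finset (Fin 3)).sort (· ≤ ·) = [0, 1] :=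
    sort_eq_of _ _ (by decide) (by decide)
  funext i
  fin_cases i
  · exact restr_val x _ _ h _ 0 rfl
  · exact restr_val x _ _ h _ 1 rfl

lemma rst3_02 {α : Type*} (x : Fin 3 → α) :
    restr x ({0,2} : Finset (Fin 3)) = ![x 0, x 2] := by
  have h : ({0,2} : Finset (Fin 3)).sort (· ≤ ·) = [0, 2] :=
    sort_eq_of _ _ (by decide) (by decide)
  funext i
  fin_cases i
  · exact restr_val x _ _ h _ 0 rfl
  · exact restr_val x _ _ h _ 2 rfl

lemma rst3_12 {α : Type*} (x : Fin 3 → α) :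
    restr x ({1,2} : Finset (Fin 3)) = ![x 1, x 2] := by
  have h : ({1,2} : Finset (Fin 3)).sort (· ≤ ·) = [1, 2] :=
    sort_eq_of _ _ (by decide) (by decide)
  funext i
  fin_cases i
  · exact restr_val x _ _ h _ 1 rfl
  · exact restr_val x _ _ h _ 2 rfl

lemma rst3_012 {α : Type*} (x : Fin 3 → α) :
    restr x ({0,1,2} : Finset (Fin 3)) = x := by
  have h : ({0,1,2} : Finset (Fin 3)).sort (· ≤ ·) = [0, 1, 2] :=
    sort_eq_of _ _ (by decide) (by decide)
  funext i
  fin_cases i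
  · exact restr_val x _ _ h _ 0 rfl
  · exact restr_val x _ _ h _ 1 rfl
  · exact restr_val x _ _ h _ 2 rfl

lemma rst4_0 {α : Type*} (x : Fin 4 → α) :
    restr x ({0} : Finset (Fin 4)) = ![x 0] := by
  have h : ({0} : Finset (Fin 4)).sort (· ≤ ·) = [0] :=
    sort_eq_of _ _ (by decide) (by decide)
  funext i
  fin_cases i
  · exact restr_val x _ _ h _ 0 rfl

lemma rst4_1 {α : Type*} (x : Fin 4 → α) :
    restr x ({1} : Finset (Fin 4)) = ![x 1] := by
  have h : ({1} : Finset (Fin 4)).sort (· ≤ ·) = [1] :=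
    sort_eq_of _ _ (by decide) (by decide)
  funext i
  fin_cases i
  · exact restr_val x _ _ h _ 1 rfl

lemma rst4_2 {α : Type*} (x : Fin 4 → α) :
    restr x ({2} : Finset (Fin 4)) = ![x 2] := by
  have h : ({2} : Finset (Fin 4)).sort (· ≤ ·) = [2] :=
    sort_eq_of _ _ (by decide) (by decide)
  funext i
  fin_cases i
  · exact restr_val x _ _ h _ 2 rfl

lemma rst4_3 {α : Type*} (x : Fin 4 → α) :
    restr x ({3} : Finset (Fin 4)) = ![x 3] := by
  have h : ({3} : Finset (Fin 4)).sort (· ≤ ·) = [3] :=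
    sort_eq_of _ _ (by decide) (by decide)
  funext i
  fin_cases i
  · exact restr_val x _ _ h _ 3 rfl

lemma rst4_01 {α : Type*} (x : Fin 4 → α) :
    restr x ({0,1} : Finset (Fin 4)) = ![x 0, x 1] := by
  have h : ({0,1} : Finset (Fin 4)).sort (· ≤ ·) = [0, 1] :=
    sort_eq_of _ _ (by decide) (by decide)
  funext i
  fin_cases i
  · exact restr_val x _ _ h _ 0 rfl
  · exact restr_val x _ _ h _ 1 rfl

lemma rst4_02 {α : Type*} (x : Fin 4 → α) :
    restr x ({0,2} : Finset (Fin 4)) = ![x 0, x 2] := by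
  have h : ({0,2} : Finset (Fin 4)).sort (· ≤ ·) = [0, 2] :=
    sort_eq_of _ _ (by decide) (by decide)
  funext i
  fin_cases i
  · exact restr_val x _ _ h _ 0 rfl
  · exact restr_val x _ _ h _ 2 rfl

lemma rst4_03 {α : Type*} (x : Fin 4 → α) :
    restr x ({0,3} : Finset (Fin 4)) = ![x 0, x 3] := by
  have h : ({0,3} : Finset (Fin 4)).sort (· ≤ ·) = [0, 3] :=
    sort_eq_of _ _ (by decide) (by decide)
  funext i
  fin_cases i
  · exact restr_val x _ _ h _ 0 rfl
  · exact restr_val x _ _ h _ 3 rfl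

lemma rst4_12 {α : Type*} (x : Fin 4 → α) :
    restr x ({1,2} : Finset (Fin 4)) = ![x 1, x 2] := by
  have h : ({1,2} : Finset (Fin 4)).sort (· ≤ ·) = [1, 2] :=
    sort_eq_of _ _ (by decide) (by decide)
  funext i
  fin_cases i
  · exact restr_val x _ _ h _ 1 rfl
  · exact restr_val x _ _ h _ 2 rfl

lemma rst4_13 {α : Type*} (x : Fin 4 → α) :
    restr x ({1,3} : Finset (Fin 4)) = ![x 1, x 3] := by
  have h : ({1,3} : Finset (Fin 4)).sort (· ≤ ·) = [1, 3] :=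
    sort_eq_of _ _ (by decide) (by decide)
  funext i
  fin_cases i
  · exact restr_val x _ _ h _ 1 rfl
  · exact restr_val x _ _ h _ 3 rfl

lemma rst4_23 {α : Type*} (x : Fin 4 → α) :
    restr x ({2,3} : Finset (Fin 4)) = ![x 2, x 3] := by
  have h : ({2,3} : Finset (Fin 4)).sort (· ≤ ·) = [2, 3] :=
    sort_eq_of _ _ (by decide) (by decide)
  funext i
  fin_cases i
  · exact restr_val x _ _ h _ 2 rfl
  · exact restr_val x _ _ h _ 3 rfl

lemma rst4_012 {α : Type*} (x : Fin 4 → α) :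
    restr x ({0,1,2} : Finset (Fin 4)) = ![x 0, x 1, x 2] := by
  have h : ({0,1,2} : Finset (Fin 4)).sort (· ≤ ·) = [0, 1, 2] :=
    sort_eq_of _ _ (by decide) (by decide)
  funext i
  fin_cases i
  · exact restr_val x _ _ h _ 0 rfl
  · exact restr_val x _ _ h _ 1 rfl
  · exact restr_val x _ _ h _ 2 rfl

lemma rst4_013 {α : Type*} (x : Fin 4 → α) :
    restr x ({0,1,3} : Finset (Fin 4)) = ![x 0, x 1, x 3] := by
  have h : ({0,1,3} : Finset (Fin 4)).sort (· ≤ ·) = [0, 1, 3] :=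
    sort_eq_of _ _ (by decide) (by decide)
  funext i
  fin_cases i
  · exact restr_val x _ _ h _ 0 rfl
  · exact restr_val x _ _ h _ 1 rfl
  · exact restr_val x _ _ h _ 3 rfl

lemma rst4_023 {α : Type*} (x : Fin 4 → α) :
    restr x ({0,2,3} : Finset (Fin 4)) = ![x 0, x 2, x 3] := by
  have h : ({0,2,3} : Finset (Fin 4)).sort (· ≤ ·) = [0, 2, 3] :=
    sort_eq_of _ _ (by decide) (by decide)
  funext i
  fin_cases i
  · exact restr_val x _ _ h _ 0 rfl
  · exact restr_val x _ _ h _ 2 rfl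
  · exact restr_val x _ _ h _ 3 rfl

lemma rst4_123 {α : Type*} (x : Fin 4 → α) :
    restr x ({1,2,3} : Finset (Fin 4)) = ![x 1, x 2, x 3] := by
  have h : ({1,2,3} : Finset (Fin 4)).sort (· ≤ ·) = [1, 2, 3] :=
    sort_eq_of _ _ (by decide) (by decide)
  funext i
  fin_cases i
  · exact restr_val x _ _ h _ 1 rfl
  · exact restr_val x _ _ h _ 2 rfl
  · exact restr_val x _ _ h _ 3 rfl

lemma rst4_0123 {α : Type*} (x : Fin 4 → α) :
    restr x ({0,1,2,3} : Finset (Fin 4)) = x := by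
  have h : ({0,1,2,3} : Finset (Fin 4)).sort (· ≤ ·) = [0, 1, 2, 3] :=
    sort_eq_of _ _ (by decide) (by decide)
  funext i
  fin_cases i
  · exact restr_val x _ _ h _ 0 rfl
  · exact restr_val x _ _ h _ 1 rfl
  · exact restr_val x _ _ h _ 2 rfl
  · exact restr_val x _ _ h _ 3 rfl


-- ===================== block lemmas =====================

section blk

variable {A : Type*} [Ring A] [Algebra ℂ A]
  (κ : (m : ℕ) → (Fin m → Bool) → MultilinearMap ℂ (fun _ : Fin m => A) ℂ)
  (κf : (m : ℕ) → MultilinearMap ℂ (fun _ : Fin m => A) ℂ)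

lemma bK1_0 (χ : Fin 1 → Bool) (a : Fin 1 → A) :
    κ ({0} : Finset (Fin 1)).card (restr χ {0}) (restr a {0}) =
      κ 1 χ a := by
  show κ 1 (restr χ ({0} : Finset (Fin 1))) (restr a ({0} : Finset (Fin 1))) = _
  rw [rst1_0 χ, rst1_0 a]

lemma bF1_0 (a : Fin 1 → A) :
    κf ({0} : Finset (Fin 1)).card (restr a {0}) = κf 1 a := by
  show κf 1 (restr a ({0} : Finset (Fin 1))) = _
  rw [rst1_0 a]

lemma bK2_0 (χ : Fin 2 → Bool) (a : Fin 2 → A) :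
    κ ({0} : Finset (Fin 2)).card (restr χ {0}) (restr a {0}) =
      κ 1 ![χ 0] ![a 0] := by
  show κ 1 (restr χ ({0} : Finset (Fin 2))) (restr a ({0} : Finset (Fin 2))) = _
  rw [rst2_0 χ, rst2_0 a]

lemma bF2_0 (a : Fin 2 → A) :
    κf ({0} : Finset (Fin 2)).card (restr a {0}) = κf 1 ![a 0] := by
  show κf 1 (restr a ({0} : Finset (Fin 2))) = _
  rw [rst2_0 a]

lemma bK2_1 (χ : Fin 2 → Bool) (a : Fin 2 → A) :
    κ ({1} : Finset (Fin 2)).card (restr χ {1}) (restr a {1}) =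
      κ 1 ![χ 1] ![a 1] := by
  show κ 1 (restr χ ({1} : Finset (Fin 2))) (restr a ({1} : Finset (Fin 2))) = _
  rw [rst2_1 χ, rst2_1 a]

lemma bF2_1 (a : Fin 2 → A) :
    κf ({1} : Finset (Fin 2)).card (restr a {1}) = κf 1 ![a 1] := by
  show κf 1 (restr a ({1} : Finset (Fin 2))) = _
  rw [rst2_1 a]

lemma bK2_01 (χ : Fin 2 → Bool) (a : Fin 2 → A) :
    κ ({0,1} : Finset (Fin 2)).card (restr χ {0,1}) (restr a {0,1}) =
      κ 2 χ a := by
  show κ 2 (restr χ ({0,1} : Finset (Fin 2))) (restr a ({0,1} : Finset (Fin 2))) = _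
  rw [rst2_01 χ, rst2_01 a]

lemma bF2_01 (a : Fin 2 → A) :
    κf ({0,1} : Finset (Fin 2)).card (restr a {0,1}) = κf 2 a := by
  show κf 2 (restr a ({0,1} : Finset (Fin 2))) = _
  rw [rst2_01 a]

lemma bK3_0 (χ : Fin 3 → Bool) (a : Fin 3 → A) :
    κ ({0} : Finset (Fin 3)).card (restr χ {0}) (restr a {0}) =
      κ 1 ![χ 0] ![a 0] := by
  show κ 1 (restr χ ({0} : Finset (Fin 3))) (restr a ({0} : Finset (Fin 3))) = _
  rw [rst3_0 χ, rst3_0 a]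

lemma bF3_0 (a : Fin 3 → A) :
    κf ({0} : Finset (Fin 3)).card (restr a {0}) = κf 1 ![a 0] := by
  show κf 1 (restr a ({0} : Finset (Fin 3))) = _
  rw [rst3_0 a]

lemma bK3_1 (χ : Fin 3 → Bool) (a : Fin 3 → A) :
    κ ({1} : Finset (Fin 3)).card (restr χ {1}) (restr a {1}) =
      κ 1 ![χ 1] ![a 1] := by
  show κ 1 (restr χ ({1} : Finset (Fin 3))) (restr a ({1} : Finset (Fin 3))) = _
  rw [rst3_1 χ, rst3_1 a]

lemma bF3_1 (a : Fin 3 → A) :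
    κf ({1} : Finset (Fin 3)).card (restr a {1}) = κf 1 ![a 1] := by
  show κf 1 (restr a ({1} : Finset (Fin 3))) = _
  rw [rst3_1 a]

lemma bK3_2 (χ : Fin 3 → Bool) (a : Fin 3 → A) :
    κ ({2} : Finset (Fin 3)).card (restr χ {2}) (restr a {2}) =
      κ 1 ![χ 2] ![a 2] := by
  show κ 1 (restr χ ({2} : Finset (Fin 3))) (restr a ({2} : Finset (Fin 3))) = _
  rw [rst3_2 χ, rst3_2 a]

lemma bF3_2 (a : Fin 3 → A) :
    κf ({2} : Finset (Fin 3)).card (restr a {2}) = κf 1 ![a 2] := by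
  show κf 1 (restr a ({2} : Finset (Fin 3))) = _
  rw [rst3_2 a]

lemma bK3_01 (χ : Fin 3 → Bool) (a : Fin 3 → A) :
    κ ({0,1} : Finset (Fin 3)).card (restr χ {0,1}) (restr a {0,1}) =
      κ 2 ![χ 0, χ 1] ![a 0, a 1] := by
  show κ 2 (restr χ ({0,1} : Finset (Fin 3))) (restr a ({0,1} : Finset (Fin 3))) = _
  rw [rst3_01 χ, rst3_01 a]

lemma bF3_01 (a : Fin 3 → A) :
    κf ({0,1} : Finset (Fin 3)).card (restr a {0,1}) = κf 2 ![a 0, a 1] := by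
  show κf 2 (restr a ({0,1} : Finset (Fin 3))) = _
  rw [rst3_01 a]

lemma bK3_02 (χ : Fin 3 → Bool) (a : Fin 3 → A) :
    κ ({0,2} : Finset (Fin 3)).card (restr χ {0,2}) (restr a {0,2}) =
      κ 2 ![χ 0, χ 2] ![a 0, a 2] := by
  show κ 2 (restr χ ({0,2} : Finset (Fin 3))) (restr a ({0,2} : Finset (Fin 3))) = _
  rw [rst3_02 χ, rst3_02 a]

lemma bF3_02 (a : Fin 3 → A) :
    κf ({0,2} : Finset (Fin 3)).card (restr a {0,2}) = κf 2 ![a 0, a 2] := by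
  show κf 2 (restr a ({0,2} : Finset (Fin 3))) = _
  rw [rst3_02 a]

lemma bK3_12 (χ : Fin 3 → Bool) (a : Fin 3 → A) :
    κ ({1,2} : Finset (Fin 3)).card (restr χ {1,2}) (restr a {1,2}) =
      κ 2 ![χ 1, χ 2] ![a 1, a 2] := by
  show κ 2 (restr χ ({1,2} : Finset (Fin 3))) (restr a ({1,2} : Finset (Fin 3))) = _
  rw [rst3_12 χ, rst3_12 a]

lemma bF3_12 (a : Fin 3 → A) :
    κf ({1,2} : Finset (Fin 3)).card (restr a {1,2}) = κf 2 ![a 1, a 2] := by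
  show κf 2 (restr a ({1,2} : Finset (Fin 3))) = _
  rw [rst3_12 a]

lemma bK3_012 (χ : Fin 3 → Bool) (a : Fin 3 → A) :
    κ ({0,1,2} : Finset (Fin 3)).card (restr χ {0,1,2}) (restr a {0,1,2}) =
      κ 3 χ a := by
  show κ 3 (restr χ ({0,1,2} : Finset (Fin 3))) (restr a ({0,1,2} : Finset (Fin 3))) = _
  rw [rst3_012 χ, rst3_012 a]

lemma bF3_012 (a : Fin 3 → A) :
    κf ({0,1,2} : Finset (Fin 3)).card (restr a {0,1,2}) = κf 3 a := by
  show κf 3 (restr a ({0,1,2} : Finset (Fin 3))) = _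
  rw [rst3_012 a]

lemma bK4_0 (χ : Fin 4 → Bool) (a : Fin 4 → A) :
    κ ({0} : Finset (Fin 4)).card (restr χ {0}) (restr a {0}) =
      κ 1 ![χ 0] ![a 0] := by
  show κ 1 (restr χ ({0} : Finset (Fin 4))) (restr a ({0} : Finset (Fin 4))) = _
  rw [rst4_0 χ, rst4_0 a]

lemma bF4_0 (a : Fin 4 → A) :
    κf ({0} : Finset (Fin 4)).card (restr a {0}) = κf 1 ![a 0] := by
  show κf 1 (restr a ({0} : Finset (Fin 4))) = _
  rw [rst4_0 a]

lemma bK4_1 (χ : Fin 4 → Bool) (a : Fin 4 → A) :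
    κ ({1} : Finset (Fin 4)).card (restr χ {1}) (restr a {1}) =
      κ 1 ![χ 1] ![a 1] := by
  show κ 1 (restr χ ({1} : Finset (Fin 4))) (restr a ({1} : Finset (Fin 4))) = _
  rw [rst4_1 χ, rst4_1 a]

lemma bF4_1 (a : Fin 4 → A) :
    κf ({1} : Finset (Fin 4)).card (restr a {1}) = κf 1 ![a 1] := by
  show κf 1 (restr a ({1} : Finset (Fin 4))) = _
  rw [rst4_1 a]

lemma bK4_2 (χ : Fin 4 → Bool) (a : Fin 4 → A) :
    κ ({2} : Finset (Fin 4)).card (restr χ {2}) (restr a {2}) =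
      κ 1 ![χ 2] ![a 2] := by
  show κ 1 (restr χ ({2} : Finset (Fin 4))) (restr a ({2} : Finset (Fin 4))) = _
  rw [rst4_2 χ, rst4_2 a]

lemma bF4_2 (a : Fin 4 → A) :
    κf ({2} : Finset (Fin 4)).card (restr a {2}) = κf 1 ![a 2] := by
  show κf 1 (restr a ({2} : Finset (Fin 4))) = _
  rw [rst4_2 a]

lemma bK4_3 (χ : Fin 4 → Bool) (a : Fin 4 → A) :
    κ ({3} : Finset (Fin 4)).card (restr χ {3}) (restr a {3}) =
      κ 1 ![χ 3] ![a 3] := by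
  show κ 1 (restr χ ({3} : Finset (Fin 4))) (restr a ({3} : Finset (Fin 4))) = _
  rw [rst4_3 χ, rst4_3 a]

lemma bF4_3 (a : Fin 4 → A) :
    κf ({3} : Finset (Fin 4)).card (restr a {3}) = κf 1 ![a 3] := by
  show κf 1 (restr a ({3} : Finset (Fin 4))) = _
  rw [rst4_3 a]

lemma bK4_01 (χ : Fin 4 → Bool) (a : Fin 4 → A) :
    κ ({0,1} : Finset (Fin 4)).card (restr χ {0,1}) (restr a {0,1}) =
      κ 2 ![χ 0, χ 1] ![a 0, a 1] := by
  show κ 2 (restr χ ({0,1} : Finset (Fin 4))) (restr a ({0,1} : Finset (Fin 4))) = _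
  rw [rst4_01 χ, rst4_01 a]

lemma bF4_01 (a : Fin 4 → A) :
    κf ({0,1} : Finset (Fin 4)).card (restr a {0,1}) = κf 2 ![a 0, a 1] := by
  show κf 2 (restr a ({0,1} : Finset (Fin 4))) = _
  rw [rst4_01 a]

lemma bK4_02 (χ : Fin 4 → Bool) (a : Fin 4 → A) :
    κ ({0,2} : Finset (Fin 4)).card (restr χ {0,2}) (restr a {0,2}) =
      κ 2 ![χ 0, χ 2] ![a 0, a 2] := by
  show κ 2 (restr χ ({0,2} : Finset (Fin 4))) (restr a ({0,2} : Finset (Fin 4))) = _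
  rw [rst4_02 χ, rst4_02 a]

lemma bF4_02 (a : Fin 4 → A) :
    κf ({0,2} : Finset (Fin 4)).card (restr a {0,2}) = κf 2 ![a 0, a 2] := by
  show κf 2 (restr a ({0,2} : Finset (Fin 4))) = _
  rw [rst4_02 a]

lemma bK4_03 (χ : Fin 4 → Bool) (a : Fin 4 → A) :
    κ ({0,3} : Finset (Fin 4)).card (restr χ {0,3}) (restr a {0,3}) =
      κ 2 ![χ 0, χ 3] ![a 0, a 3] := by
  show κ 2 (restr χ ({0,3} : Finset (Fin 4))) (restr a ({0,3} : Finset (Fin 4))) = _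
  rw [rst4_03 χ, rst4_03 a]

lemma bF4_03 (a : Fin 4 → A) :
    κf ({0,3} : Finset (Fin 4)).card (restr a {0,3}) = κf 2 ![a 0, a 3] := by
  show κf 2 (restr a ({0,3} : Finset (Fin 4))) = _
  rw [rst4_03 a]

lemma bK4_12 (χ : Fin 4 → Bool) (a : Fin 4 → A) :
    κ ({1,2} : Finset (Fin 4)).card (restr χ {1,2}) (restr a {1,2}) =
      κ 2 ![χ 1, χ 2] ![a 1, a 2] := by
  show κ 2 (restr χ ({1,2} : Finset (Fin 4))) (restr a ({1,2} : Finset (Fin 4))) = _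
  rw [rst4_12 χ, rst4_12 a]

lemma bF4_12 (a : Fin 4 → A) :
    κf ({1,2} : Finset (Fin 4)).card (restr a {1,2}) = κf 2 ![a 1, a 2] := by
  show κf 2 (restr a ({1,2} : Finset (Fin 4))) = _
  rw [rst4_12 a]

lemma bK4_13 (χ : Fin 4 → Bool) (a : Fin 4 → A) :
    κ ({1,3} : Finset (Fin 4)).card (restr χ {1,3}) (restr a {1,3}) =
      κ 2 ![χ 1, χ 3] ![a 1, a 3] := by
  show κ 2 (restr χ ({1,3} : Finset (Fin 4))) (restr a ({1,3} : Finset (Fin 4))) = _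
  rw [rst4_13 χ, rst4_13 a]

lemma bF4_13 (a : Fin 4 → A) :
    κf ({1,3} : Finset (Fin 4)).card (restr a {1,3}) = κf 2 ![a 1, a 3] := by
  show κf 2 (restr a ({1,3} : Finset (Fin 4))) = _
  rw [rst4_13 a]

lemma bK4_23 (χ : Fin 4 → Bool) (a : Fin 4 → A) :
    κ ({2,3} : Finset (Fin 4)).card (restr χ {2,3}) (restr a {2,3}) =
      κ 2 ![χ 2, χ 3] ![a 2, a 3] := by
  show κ 2 (restr χ ({2,3} : Finset (Fin 4))) (restr a ({2,3} : Finset (Fin 4))) = _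
  rw [rst4_23 χ, rst4_23 a]

lemma bF4_23 (a : Fin 4 → A) :
    κf ({2,3} : Finset (Fin 4)).card (restr a {2,3}) = κf 2 ![a 2, a 3] := by
  show κf 2 (restr a ({2,3} : Finset (Fin 4))) = _
  rw [rst4_23 a]

lemma bK4_012 (χ : Fin 4 → Bool) (a : Fin 4 → A) :
    κ ({0,1,2} : Finset (Fin 4)).card (restr χ {0,1,2}) (restr a {0,1,2}) =
      κ 3 ![χ 0, χ 1, χ 2] ![a 0, a 1, a 2] := by
  show κ 3 (restr χ ({0,1,2} : Finset (Fin 4))) (restr a ({0,1,2} : Finset (Fin 4))) = _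
  rw [rst4_012 χ, rst4_012 a]

lemma bF4_012 (a : Fin 4 → A) :
    κf ({0,1,2} : Finset (Fin 4)).card (restr a {0,1,2}) = κf 3 ![a 0, a 1, a 2] := by
  show κf 3 (restr a ({0,1,2} : Finset (Fin 4))) = _
  rw [rst4_012 a]

lemma bK4_013 (χ : Fin 4 → Bool) (a : Fin 4 → A) :
    κ ({0,1,3} : Finset (Fin 4)).card (restr χ {0,1,3}) (restr a {0,1,3}) =
      κ 3 ![χ 0, χ 1, χ 3] ![a 0, a 1, a 3] := by
  show κ 3 (restr χ ({0,1,3} : Finset (Fin 4))) (restr a ({0,1,3} : Finset (Fin 4))) = _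
  rw [rst4_013 χ, rst4_013 a]

lemma bF4_013 (a : Fin 4 → A) :
    κf ({0,1,3} : Finset (Fin 4)).card (restr a {0,1,3}) = κf 3 ![a 0, a 1, a 3] := by
  show κf 3 (restr a ({0,1,3} : Finset (Fin 4))) = _
  rw [rst4_013 a]

lemma bK4_023 (χ : Fin 4 → Bool) (a : Fin 4 → A) :
    κ ({0,2,3} : Finset (Fin 4)).card (restr χ {0,2,3}) (restr a {0,2,3}) =
      κ 3 ![χ 0, χ 2, χ 3] ![a 0, a 2, a 3] := by
  show κ 3 (restr χ ({0,2,3} : Finset (Fin 4))) (restr a ({0,2,3} : Finset (Fin 4))) = _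
  rw [rst4_023 χ, rst4_023 a]

lemma bF4_023 (a : Fin 4 → A) :
    κf ({0,2,3} : Finset (Fin 4)).card (restr a {0,2,3}) = κf 3 ![a 0, a 2, a 3] := by
  show κf 3 (restr a ({0,2,3} : Finset (Fin 4))) = _
  rw [rst4_023 a]

lemma bK4_123 (χ : Fin 4 → Bool) (a : Fin 4 → A) :
    κ ({1,2,3} : Finset (Fin 4)).card (restr χ {1,2,3}) (restr a {1,2,3}) =
      κ 3 ![χ 1, χ 2, χ 3] ![a 1, a 2, a 3] := by
  show κ 3 (restr χ ({1,2,3} : Finset (Fin 4))) (restr a ({1,2,3} : Finset (Fin 4))) = _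
  rw [rst4_123 χ, rst4_123 a]

lemma bF4_123 (a : Fin 4 → A) :
    κf ({1,2,3} : Finset (Fin 4)).card (restr a {1,2,3}) = κf 3 ![a 1, a 2, a 3] := by
  show κf 3 (restr a ({1,2,3} : Finset (Fin 4))) = _
  rw [rst4_123 a]

lemma bK4_0123 (χ : Fin 4 → Bool) (a : Fin 4 → A) :
    κ ({0,1,2,3} : Finset (Fin 4)).card (restr χ {0,1,2,3}) (restr a {0,1,2,3}) =
      κ 4 χ a := by
  show κ 4 (restr χ ({0,1,2,3} : Finset (Fin 4))) (restr a ({0,1,2,3} : Finset (Fin 4))) = _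
  rw [rst4_0123 χ, rst4_0123 a]

lemma bF4_0123 (a : Fin 4 → A) :
    κf ({0,1,2,3} : Finset (Fin 4)).card (restr a {0,1,2,3}) = κf 4 a := by
  show κf 4 (restr a ({0,1,2,3} : Finset (Fin 4))) = _
  rw [rst4_0123 a]


end blk

-- ===================== cumulant identities =====================

section cum

variable {A : Type*} [Ring A] [Algebra ℂ A] (φ : A →ₗ[ℂ] ℂ)
  (κ : (m : ℕ) → (Fin m → Bool) → MultilinearMap ℂ (fun _ : Fin m => A) ℂ)
  (κf : (m : ℕ) → MultilinearMap ℂ (fun _ : Fin m => A) ℂ)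

lemma kf1 (hκf : freeFormula φ κf) (x : Fin 1 → A) : κf 1 x = φ (x 0) := by
  have hf := hκf 1 le_rfl x
  rw [Finset.filter_congr_decidable, hset1] at hf
  simp only [NC1, Finset.sum_singleton, Finset.prod_singleton, bF1_0] at hf
  have hp : (List.ofFn x).prod = x 0 := by
    simp [List.ofFn_succ]
  rw [hp] at hf
  exact hf.symm

lemma k1 (hκ : momentFormula φ κ) (c : Fin 1 → Bool) (x : Fin 1 → A) :
    κ 1 c x = φ (x 0) := by
  have hm := hκ 1 le_rfl c x
  simp only [PchiF] at hm
  rw [Finset.filter_congr_decidable, hset1, himg1 c] at hm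
  simp only [NC1, Finset.sum_singleton, Finset.prod_singleton, bK1_0] at hm
  have hp : (List.ofFn x).prod = x 0 := by
    simp [List.ofFn_succ]
  rw [hp] at hm
  exact hm.symm

lemma k2 (hκ : momentFormula φ κ) (hκf : freeFormula φ κf) (c : Fin 2 → Bool)
    (x : Fin 2 → A) : κ 2 c x = κf 2 x := by
  have hm := hκ 2 one_le_two c x
  have hf := hκf 2 one_le_two x
  simp only [PchiF] at hm
  rw [Finset.filter_congr_decidable, hset2, himg2 c] at hm
  rw [Finset.filter_congr_decidable, hset2] at hf
  simp (config := { decide := true }) only [NC2, Finset.sum_insert, Finset.prod_insert,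
    Finset.sum_singleton, Finset.prod_singleton, Finset.mem_insert, Finset.mem_singleton,
    bK2_0, bK2_1, bK2_01, bF2_0, bF2_1, bF2_01] at hm hf
  simp only [k1 φ κ hκ, kf1 φ κf hκf, Matrix.cons_val_zero] at hm hf
  linear_combination hf - hm

lemma k3 (hκ : momentFormula φ κ) (hκf : freeFormula φ κf) (c : Fin 3 → Bool)
    (x : Fin 3 → A) : κ 3 c x = κf 3 x := by
  have hm := hκ 3 (by norm_num) c x
  have hf := hκf 3 (by norm_num) x
  simp only [PchiF] at hm
  rw [Finset.filter_congr_decidable, hset3, himg3 c] at hm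
  rw [Finset.filter_congr_decidable, hset3] at hf
  simp (config := { decide := true }) only [NC3, Finset.sum_insert, Finset.prod_insert,
    Finset.sum_singleton, Finset.prod_singleton, Finset.mem_insert, Finset.mem_singleton,
    bK3_0, bK3_1, bK3_2, bK3_01, bK3_02, bK3_12, bK3_012,
    bF3_0, bF3_1, bF3_2, bF3_01, bF3_02, bF3_12, bF3_012] at hm hf
  simp only [k1 φ κ hκ, k2 φ κ κf hκ hκf, kf1 φ κf hκf, Matrix.cons_val_zero] at hm hf
  linear_combination hf - hm

end cum

/-- In any noncommutative probability space, for `a_1, a_2, a_3, a_4` one has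
`κ_{(ℓ,r,ℓ,r)}(a_1,a_2,a_3,a_4) = κ_4(a_1,a_2,a_3,a_4) + κ_2(a_1,a_4)κ_2(a_2,a_3)
− κ_2(a_1,a_3)κ_2(a_2,a_4)`, where `κ_2, κ_4` are free cumulants. -/
theorem stmt18 (A : Type*) [Ring A] [Algebra ℂ A] (φ : A →ₗ[ℂ] ℂ) (hφ : φ 1 = 1)
    (κ : (m : ℕ) → (Fin m → Bool) → MultilinearMap ℂ (fun _ : Fin m => A) ℂ)
    (hκ : momentFormula φ κ)
    (κf : (m : ℕ) → MultilinearMap ℂ (fun _ : Fin m => A) ℂ)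
    (hκf : freeFormula φ κf) :
    ∀ a : Fin 4 → A,
      κ 4 ![true, false, true, false] a =
        κf 4 a + κf 2 ![a 0, a 3] * κf 2 ![a 1, a 2]
          - κf 2 ![a 0, a 2] * κf 2 ![a 1, a 3] := by
  intro a
  have hm := hκ 4 (by norm_num) ![true, false, true, false] a
  have hf := hκf 4 (by norm_num) a
  simp only [PchiF] at hm
  rw [Finset.filter_congr_decidable, hset4, himg4] at hm
  rw [Finset.filter_congr_decidable, hset4] at hf
  simp (config := { decide := true }) only [NC4, P4, Finset.sum_insert, Finset.prod_insert,
    Finset.sum_singleton, Finset.prod_singleton, Finset.mem_insert, Finset.mem_singleton,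
    bK4_0, bK4_1, bK4_2, bK4_3, bK4_01, bK4_02, bK4_03, bK4_12, bK4_13, bK4_23,
    bK4_012, bK4_013, bK4_023, bK4_123, bK4_0123,
    bF4_0, bF4_1, bF4_2, bF4_3, bF4_01, bF4_02, bF4_03, bF4_12, bF4_13, bF4_23,
    bF4_012, bF4_013, bF4_023, bF4_123, bF4_0123] at hm hf
  simp only [k1 φ κ hκ, k2 φ κ κf hκ hκf, k3 φ κ κf hκ hκf, kf1 φ κf hκf,
    Matrix.cons_val_zero] at hm hf
  linear_combination hf - hm
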